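/- If the joint distribution of (V, A, B) factorizes according to a DAG in which the node A has no children, then P(A | V, B) = P(A | Pa(A)), i.e., A is conditionally independent of all non-parent variables given its parents. Consequently, under the value-sensitivity assumption, the distributions P(A, B) and P(A | Pa(A)) uniquely identify P(V | A, B). -/

import Mathlib

open Finset

/-- Marginal probability `P(X_s = x|_s)` of the event that the variables in `s`
take the values prescribed by `x`, for a joint pmf `p` on `ι → Fin 2`. -/
noncomputable def Pm {ι : Type} [Fintype ι] [DecidableEq ι]
    (p : (ι → Fin 2) → ℝ) (s : Finset ι) (x : ι → Fin 2) : ℝ :=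
  ∑ y ∈ Finset.univ.filter (fun y : ι → Fin 2 => ∀ i ∈ s, y i = x i), p y

section Aux

variable {ι : Type} [Fintype ι] [DecidableEq ι]

lemma Pm_congr (p : (ι → Fin 2) → ℝ) (s : Finset ι) {x y : ι → Fin 2}
    (h : ∀ i ∈ s, x i = y i) : Pm p s x = Pm p s y := by
  unfold Pm
  refine Finset.sum_congr ?_ (fun _ _ => rfl)
  apply Finset.filter_congr
  intro z _
  exact ⟨fun hz i hi => (hz i hi).trans (h i hi), fun hz i hi => (hz i hi).trans (h i hi).symm⟩

lemma Pm_nonneg (p : (ι → Fin 2) → ℝ) (hp0 : ∀ x, 0 ≤ p x) (s : Finset ι) (x : ι → Fin 2) :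
    0 ≤ Pm p s x := Finset.sum_nonneg fun y _ => hp0 y

lemma Pm_mono (p : (ι → Fin 2) → ℝ) (hp0 : ∀ x, 0 ≤ p x) {s t : Finset ι} (hst : s ⊆ t)
    (x : ι → Fin 2) : Pm p t x ≤ Pm p s x := by
  apply Finset.sum_le_sum_of_subset_of_nonneg
  · intro y hy
    simp only [mem_filter, mem_univ, true_and] at hy ⊢
    exact fun i hi => hy i (hst hi)
  · exact fun y _ _ => hp0 y

lemma Pm_univ (p : (ι → Fin 2) → ℝ) (x : ι → Fin 2) : Pm p Finset.univ x = p x := by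
  unfold Pm
  have : (Finset.univ.filter (fun y : ι → Fin 2 => ∀ i ∈ Finset.univ, y i = x i)) = {x} := by
    ext y
    rw [Finset.mem_filter, Finset.mem_singleton]
    constructor
    · intro h; funext i; exact h.2 i (Finset.mem_univ i)
    · rintro rfl; exact ⟨Finset.mem_univ y, fun i _ => rfl⟩
  rw [this, Finset.sum_singleton]

lemma Pm_split (p : (ι → Fin 2) → ℝ) (s : Finset ι) (k : ι) (hk : k ∉ s) (x : ι → Fin 2) :
    Pm p s x = ∑ v : Fin 2, Pm p (insert k s) (Function.update x k v) := by
  have key : ∀ v : Fin 2,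
      (Finset.univ.filter (fun y : ι → Fin 2 => ∀ i ∈ insert k s, y i = Function.update x k v i))
      = (Finset.univ.filter (fun y : ι → Fin 2 => ∀ i ∈ s, y i = x i)).filter
          (fun y => y k = v) := by
    intro v
    rw [Finset.filter_filter]
    apply Finset.filter_congr
    intro y _
    simp only [Finset.mem_insert, eq_iff_iff]
    constructor
    · intro h
      refine ⟨fun i hi => ?_, ?_⟩
      · have := h i (Or.inr hi)
        rwa [Function.update_of_ne (by rintro rfl; exact hk hi)] at this
      · have := h k (Or.inl rfl)
        rwa [Function.update_self] at this
    · rintro ⟨h1, h2⟩ i hi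
      rcases hi with rfl | hi
      · rw [h2, Function.update_self]
      · rw [h1 i hi, Function.update_of_ne (by rintro rfl; exact hk hi)]
  unfold Pm
  rw [← Finset.sum_fiberwise_of_maps_to (g := fun y : ι → Fin 2 => y k)
    (fun y _ => Finset.mem_univ (y k)) p]
  exact Finset.sum_congr rfl fun v _ => by rw [key v]

lemma Pm_erase_sum (p : (ι → Fin 2) → ℝ) (k : ι) (x : ι → Fin 2) :
    Pm p (Finset.univ.erase k) x = ∑ v : Fin 2, p (Function.update x k v) := by
  rw [Pm_split p _ k (Finset.notMem_erase k _) x]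
  refine Finset.sum_congr rfl fun v _ => ?_
  rw [Finset.insert_erase (Finset.mem_univ k), Pm_univ]

end Aux

section Fact

variable {ι : Type} [Fintype ι] [DecidableEq ι]

lemma Pm_erase_fact (par : ι → Finset ι) (aI : ι)
    (p : (ι → Fin 2) → ℝ) (fp : ι → (ι → Fin 2) → ℝ)
    (hnoch : ∀ i, aI ∉ par i)
    (hfp_loc : ∀ i x y, x i = y i → (∀ j ∈ par i, x j = y j) → fp i x = fp i y)
    (hfp_norm : ∀ i x, ∑ v : Fin 2, fp i (Function.update x i v) = 1)
    (hfp_fact : ∀ x, p x = ∏ i, fp i x) (x : ι → Fin 2) :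
    Pm p (Finset.univ.erase aI) x = ∏ i ∈ Finset.univ.erase aI, fp i x := by
  rw [Pm_erase_sum]
  have h1 : ∀ v : Fin 2, p (Function.update x aI v)
      = fp aI (Function.update x aI v) * ∏ i ∈ Finset.univ.erase aI, fp i x := by
    intro v
    rw [hfp_fact, ← Finset.mul_prod_erase Finset.univ _ (Finset.mem_univ aI)]
    congr 1
    refine Finset.prod_congr rfl fun i hi => ?_
    have hi' : i ≠ aI := (Finset.mem_erase.mp hi).1
    exact hfp_loc i _ _ (Function.update_of_ne hi' _ _)
      (fun j hj => Function.update_of_ne (by rintro rfl; exact hnoch i hj) _ _)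
  simp only [h1]
  rw [← Finset.sum_mul, hfp_norm aI x, one_mul]

lemma p_fact (par : ι → Finset ι) (aI : ι)
    (p : (ι → Fin 2) → ℝ) (fp : ι → (ι → Fin 2) → ℝ)
    (hnoch : ∀ i, aI ∉ par i)
    (hfp_loc : ∀ i x y, x i = y i → (∀ j ∈ par i, x j = y j) → fp i x = fp i y)
    (hfp_norm : ∀ i x, ∑ v : Fin 2, fp i (Function.update x i v) = 1)
    (hfp_fact : ∀ x, p x = ∏ i, fp i x) (x : ι → Fin 2) :
    p x = fp aI x * Pm p (Finset.univ.erase aI) x := by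
  rw [Pm_erase_fact par aI p fp hnoch hfp_loc hfp_norm hfp_fact x, hfp_fact x,
    Finset.mul_prod_erase Finset.univ (fun i => fp i x) (Finset.mem_univ aI)]

lemma Pm_insert_fact (par : ι → Finset ι) (aI : ι)
    (p : (ι → Fin 2) → ℝ) (fp : ι → (ι → Fin 2) → ℝ)
    (hnoch : ∀ i, aI ∉ par i)
    (hfp_loc : ∀ i x y, x i = y i → (∀ j ∈ par i, x j = y j) → fp i x = fp i y)
    (hfp_norm : ∀ i x, ∑ v : Fin 2, fp i (Function.update x i v) = 1)
    (hfp_fact : ∀ x, p x = ∏ i, fp i x) (x : ι → Fin 2) :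
    Pm p (insert aI (par aI)) x = fp aI x * Pm p (par aI) x := by
  set G : (ι → Fin 2) → ℝ := fun z =>
    ∑ y ∈ Finset.univ.filter (fun y : ι → Fin 2 => ∀ i ∈ insert aI (par aI), y i = z i),
      ∏ i ∈ Finset.univ.erase aI, fp i y with hG
  have hW : ∀ z, Pm p (insert aI (par aI)) z = fp aI z * G z := by
    intro z
    unfold Pm
    rw [hG, Finset.mul_sum]
    refine Finset.sum_congr rfl fun y hy => ?_
    have hy' := (Finset.mem_filter.mp hy).2
    rw [hfp_fact, ← Finset.mul_prod_erase Finset.univ _ (Finset.mem_univ aI)]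
    congr 1
    exact hfp_loc aI y z (hy' aI (Finset.mem_insert_self _ _))
      (fun j hj => hy' j (Finset.mem_insert_of_mem hj))
  have hGu : ∀ v : Fin 2, G (Function.update x aI v) = G x := by
    intro v
    rw [hG]
    refine Finset.sum_nbij' (fun y => Function.update y aI (x aI))
      (fun y => Function.update y aI v) ?_ ?_ ?_ ?_ ?_
    · intro y hy
      have hy' := (Finset.mem_filter.mp hy).2
      refine Finset.mem_filter.mpr ⟨Finset.mem_univ _, fun i hi => ?_⟩
      rcases Finset.mem_insert.mp hi with rfl | hi
      · rw [Function.update_self]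
      · have hi' : i ≠ aI := by rintro rfl; exact hnoch _ hi
        rw [Function.update_of_ne hi']
        have := hy' i (Finset.mem_insert_of_mem hi)
        rwa [Function.update_of_ne hi'] at this
    · intro y hy
      have hy' := (Finset.mem_filter.mp hy).2
      refine Finset.mem_filter.mpr ⟨Finset.mem_univ _, fun i hi => ?_⟩
      rcases Finset.mem_insert.mp hi with rfl | hi
      · rw [Function.update_self, Function.update_self]
      · have hi' : i ≠ aI := by rintro rfl; exact hnoch _ hi
        rw [Function.update_of_ne hi', Function.update_of_ne hi']
        exact hy' i (Finset.mem_insert_of_mem hi)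
    · intro y hy
      have hy' := (Finset.mem_filter.mp hy).2
      have hyv : y aI = v := by
        have := hy' aI (Finset.mem_insert_self _ _)
        rwa [Function.update_self] at this
      rw [Function.update_idem, ← hyv, Function.update_eq_self]
    · intro y hy
      have hy' := (Finset.mem_filter.mp hy).2
      have hyv : y aI = x aI := hy' aI (Finset.mem_insert_self _ _)
      rw [Function.update_idem, ← hyv, Function.update_eq_self]
    · intro y hy
      refine Finset.prod_congr rfl fun i hi => ?_
      have hi' : i ≠ aI := (Finset.mem_erase.mp hi).1
      exact hfp_loc i _ _ (Function.update_of_ne hi' _ _).symm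
        (fun j hj => (Function.update_of_ne (by rintro rfl; exact hnoch i hj) _ _).symm)
  have haa : aI ∉ par aI := hnoch aI
  rw [hW x, Pm_split p (par aI) aI haa x]
  congr 1
  rw [show (∑ v : Fin 2, Pm p (insert aI (par aI)) (Function.update x aI v))
      = ∑ v : Fin 2, fp aI (Function.update x aI v) * G x from
    Finset.sum_congr rfl fun v _ => by rw [hW, hGu], ← Finset.sum_mul, hfp_norm aI x, one_mul]

end Fact


/-- Corollary 2: in a Bayesian network (joint pmf Markov w.r.t. a DAG, given by a
factorization into normalized kernels, each depending only on its node and its parents)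
in which the anchor node `aI` has no children, `P(A | V, B) = P(A | Pa(A))`; consequently,
under value-sensitivity, `P(A, B)` and `P(A | Pa(A))` uniquely identify `P(V | A, B)`. -/
theorem stmt_4 {ι : Type} [Fintype ι] [DecidableEq ι]
    (par : ι → Finset ι) (ord : ι → ℕ)
    (hacyc : ∀ i, ∀ j ∈ par i, ord j < ord i)          -- the parent relation is a DAG
    (vI aI : ι) (hva : vI ≠ aI)
    (hnoch : ∀ i, aI ∉ par i)                          -- A has no children
    (p q : (ι → Fin 2) → ℝ)
    (hp0 : ∀ x, 0 ≤ p x) (hp1 : ∑ x, p x = 1)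
    (hq0 : ∀ x, 0 ≤ q x) (hq1 : ∑ x, q x = 1)
    (fp fq : ι → (ι → Fin 2) → ℝ)
    (hfp_nn : ∀ i x, 0 ≤ fp i x)
    (hfp_loc : ∀ i x y, x i = y i → (∀ j ∈ par i, x j = y j) → fp i x = fp i y)
    (hfp_norm : ∀ i x, ∑ v : Fin 2, fp i (Function.update x i v) = 1)
    (hfp_fact : ∀ x, p x = ∏ i, fp i x)                -- p is Markov w.r.t. the DAG
    (hfq_nn : ∀ i x, 0 ≤ fq i x)
    (hfq_loc : ∀ i x y, x i = y i → (∀ j ∈ par i, x j = y j) → fq i x = fq i y)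
    (hfq_norm : ∀ i x, ∑ v : Fin 2, fq i (Function.update x i v) = 1)
    (hfq_fact : ∀ x, q x = ∏ i, fq i x)                -- q is Markov w.r.t. the DAG
    -- positivity of P(B=b, V=v) on the support of (A, B), for both p and q
    (hpos : ∀ x, 0 < Pm p (Finset.univ.erase vI) x → ∀ v : Fin 2,
      0 < Pm p (Finset.univ.erase aI) (Function.update x vI v) ∧
      0 < Pm q (Finset.univ.erase aI) (Function.update x vI v))
    -- value-sensitivity for p
    (hsens : ∀ x : ι → Fin 2,
      0 < Pm p (Finset.univ.erase aI) (Function.update x vI 0) →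
      0 < Pm p (Finset.univ.erase aI) (Function.update x vI 1) →
      p (Function.update (Function.update x vI 1) aI 1) /
          Pm p (Finset.univ.erase aI) (Function.update x vI 1) ≠
        p (Function.update (Function.update x vI 0) aI 1) /
          Pm p (Finset.univ.erase aI) (Function.update x vI 0))
    -- agreement on P(A, B)
    (hAB : ∀ x, Pm p (Finset.univ.erase vI) x = Pm q (Finset.univ.erase vI) x)
    -- agreement on P(A | Pa(A))
    (hApa : ∀ x, 0 < Pm p (par aI) x → 0 < Pm q (par aI) x →
      Pm p (insert aI (par aI)) x / Pm p (par aI) x =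
        Pm q (insert aI (par aI)) x / Pm q (par aI) x) :
    -- (1) A is conditionally independent of the non-parents given its parents
    (∀ x, 0 < Pm p (Finset.univ.erase aI) x → 0 < Pm p (par aI) x →
      p x / Pm p (Finset.univ.erase aI) x =
        Pm p (insert aI (par aI)) x / Pm p (par aI) x) ∧
    -- (2) p and q agree on P(V | A, B)
    (∀ x, 0 < Pm p (Finset.univ.erase vI) x →
      p x / Pm p (Finset.univ.erase vI) x = q x / Pm q (Finset.univ.erase vI) x) := by
  have haa : aI ∉ par aI := hnoch aI
  have hparsub : par aI ⊆ Finset.univ.erase aI := fun j hj =>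
    Finset.mem_erase.mpr ⟨by rintro rfl; exact haa hj, Finset.mem_univ j⟩
  constructor
  · intro x h1 h2
    rw [Pm_insert_fact par aI p fp hnoch hfp_loc hfp_norm hfp_fact x,
      p_fact par aI p fp hnoch hfp_loc hfp_norm hfp_fact x,
      mul_div_assoc, mul_div_assoc, div_self (ne_of_gt h1), div_self (ne_of_gt h2)]
  · intro x hx
    have hpv : ∀ v : Fin 2,
        0 < Pm p (Finset.univ.erase aI) (Function.update x vI v) :=
      fun v => (hpos x hx v).1
    have hqv : ∀ v : Fin 2,
        0 < Pm q (Finset.univ.erase aI) (Function.update x vI v) :=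
      fun v => (hpos x hx v).2
    have fvals : ∀ v a : Fin 2,
        fp aI (Function.update (Function.update x vI v) aI a)
          = fq aI (Function.update (Function.update x vI v) aI a) := by
      intro v a
      set y := Function.update (Function.update x vI v) aI a with hy
      have hcong : ∀ r : (ι → Fin 2) → ℝ,
          Pm r (par aI) y = Pm r (par aI) (Function.update x vI v) := by
        intro r
        exact Pm_congr r (par aI)
          (fun i hi => Function.update_of_ne (by rintro rfl; exact haa hi) _ _)
      have hpp : 0 < Pm p (par aI) y := by
        rw [hcong p]
        exact lt_of_lt_of_le (hpv v) (Pm_mono p hp0 hparsub _)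
      have hqq : 0 < Pm q (par aI) y := by
        rw [hcong q]
        exact lt_of_lt_of_le (hqv v) (Pm_mono q hq0 hparsub _)
      have h := hApa y hpp hqq
      rwa [Pm_insert_fact par aI p fp hnoch hfp_loc hfp_norm hfp_fact y,
        Pm_insert_fact par aI q fq hnoch hfq_loc hfq_norm hfq_fact y,
        mul_div_assoc, mul_div_assoc, div_self (ne_of_gt hpp), div_self (ne_of_gt hqq),
        mul_one, mul_one] at h
    have hPmAerase : ∀ (r : (ι → Fin 2) → ℝ) (v a : Fin 2),
        Pm r (Finset.univ.erase aI) (Function.update (Function.update x vI v) aI a)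
          = Pm r (Finset.univ.erase aI) (Function.update x vI v) := by
      intro r v a
      exact Pm_congr r _ (fun i hi =>
        Function.update_of_ne (Finset.mem_erase.mp hi).1 _ _)
    have pval : ∀ v a : Fin 2,
        p (Function.update (Function.update x vI v) aI a)
          = fp aI (Function.update (Function.update x vI v) aI a)
            * Pm p (Finset.univ.erase aI) (Function.update x vI v) := by
      intro v a
      rw [p_fact par aI p fp hnoch hfp_loc hfp_norm hfp_fact, hPmAerase p v a]
    have qval : ∀ v a : Fin 2,
        q (Function.update (Function.update x vI v) aI a)
          = fq aI (Function.update (Function.update x vI v) aI a)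
            * Pm q (Finset.univ.erase aI) (Function.update x vI v) := by
      intro v a
      rw [p_fact par aI q fq hnoch hfq_loc hfq_norm hfq_fact, hPmAerase q v a]
    have hsens' := hsens x (hpv 0) (hpv 1)
    rw [pval 1 1, pval 0 1, mul_div_assoc, mul_div_assoc,
      div_self (ne_of_gt (hpv 1)), div_self (ne_of_gt (hpv 0)), mul_one, mul_one] at hsens'
    have hABeq : ∀ a : Fin 2,
        (∑ v : Fin 2, fp aI (Function.update (Function.update x vI v) aI a)
            * Pm p (Finset.univ.erase aI) (Function.update x vI v))
        = ∑ v : Fin 2, fp aI (Function.update (Function.update x vI v) aI a)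
            * Pm q (Finset.univ.erase aI) (Function.update x vI v) := by
      intro a
      have h := hAB (Function.update x aI a)
      rw [Pm_split p (Finset.univ.erase vI) vI (Finset.notMem_erase vI Finset.univ) _,
        Pm_split q (Finset.univ.erase vI) vI (Finset.notMem_erase vI Finset.univ) _] at h
      have hrw : ∀ (r : (ι → Fin 2) → ℝ) (v : Fin 2),
          Pm r (insert vI (Finset.univ.erase vI))
              (Function.update (Function.update x aI a) vI v)
            = r (Function.update (Function.update x vI v) aI a) := by
        intro r v
        rw [Finset.insert_erase (Finset.mem_univ vI), Pm_univ,
          Function.update_comm (Ne.symm hva)]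
      simp only [hrw] at h
      simp only [pval, qval] at h
      simp only [← fvals] at h
      exact h
    have hnormv : ∀ v : Fin 2,
        fp aI (Function.update (Function.update x vI v) aI 0)
          + fp aI (Function.update (Function.update x vI v) aI 1) = 1 := by
      intro v
      have := hfp_norm aI (Function.update x vI v)
      rwa [Fin.sum_univ_two] at this
    have arith : ∀ a0 a1 b0 b1 P0 P1 Q0 Q1 : ℝ,
        a0 * P0 + a1 * P1 = a0 * Q0 + a1 * Q1 →
        b0 * P0 + b1 * P1 = b0 * Q0 + b1 * Q1 →
        b0 + a0 = 1 → b1 + a1 = 1 → a1 ≠ a0 → P0 = Q0 ∧ P1 = Q1 := by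
      intro a0 a1 b0 b1 P0 P1 Q0 Q1 h1 h0 hb0 hb1 hne
      have hb0' : b0 = 1 - a0 := by linarith
      have hb1' : b1 = 1 - a1 := by linarith
      rw [hb0', hb1'] at h0
      have hsum : P0 + P1 = Q0 + Q1 := by nlinarith [h0, h1]
      have h2 : a1 * (P0 + P1) = a1 * (Q0 + Q1) := by rw [hsum]
      have key : (a0 - a1) * (P0 - Q0) = 0 := by nlinarith [h1, h2]
      rcases mul_eq_zero.mp key with h | h
      · exact absurd (by linarith : a1 = a0) hne
      · constructor <;> linarith
    have h1 := hABeq 1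
    have h0 := hABeq 0
    simp only [Fin.sum_univ_two] at h1 h0
    obtain ⟨hP0, hP1⟩ := arith _ _ _ _ _ _ _ _ h1 h0 (hnormv 0) (hnormv 1) hsens'
    have hv : ∀ v : Fin 2,
        Pm p (Finset.univ.erase aI) (Function.update x vI v)
          = Pm q (Finset.univ.erase aI) (Function.update x vI v) := by
      intro v
      fin_cases v
      · exact hP0
      · exact hP1
    have hPe : Pm p (Finset.univ.erase aI) x = Pm q (Finset.univ.erase aI) x := by
      have := hv (x vI)
      rwa [Function.update_eq_self vI x] at this
    have hfpq : fp aI x = fq aI x := by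
      have h := fvals (x vI) (x aI)
      rwa [Function.update_eq_self vI x, Function.update_eq_self aI x] at h
    rw [p_fact par aI p fp hnoch hfp_loc hfp_norm hfp_fact x,
      p_fact par aI q fq hnoch hfq_loc hfq_norm hfq_fact x,
      hfpq, hPe, hAB x]
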